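/- For the Taub-Bolt metric with b(r)² = 4(r+n)(r+3n) and c(r)² = 16n²·r(r+3n/2)/((r+n)(r+3n)) (n > 0), one has: (i) db²/dr > 0 and dc²/dr > 0 for all r > 0; (ii) c(r)/b(r) ≤ 1 for all r > 0; (iii) c(r)/b(r) → 0 as r → 0⁺ and c(r)/b(r) → 0 as r → ∞. -/

import Mathlib

/-- For the Taub-Bolt coefficients `b² = 4(r+n)(r+3n)`,
`c² = 16n² r(r+3n/2)/((r+n)(r+3n))` with `n > 0`:
(i) `(b²)' > 0` and `(c²)' > 0` on `(0,∞)`; (ii) `c/b ≤ 1` on `(0,∞)`;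
(iii) `c/b → 0` as `r → 0⁺` and as `r → ∞`. -/
theorem stmt_7 (n : ℝ) (hn : 0 < n) :
    let b2 : ℝ → ℝ := fun r => 4*(r + n)*(r + 3*n)
    let c2 : ℝ → ℝ := fun r => 16*n^2*(r*(r + 3*n/2))/((r + n)*(r + 3*n))
    (∀ r > 0, 0 < deriv b2 r ∧ 0 < deriv c2 r) ∧
    (∀ r > 0, Real.sqrt (c2 r) / Real.sqrt (b2 r) ≤ 1) ∧
    Filter.Tendsto (fun r => Real.sqrt (c2 r) / Real.sqrt (b2 r))
      (nhdsWithin 0 (Set.Ioi 0)) (nhds 0) ∧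
    Filter.Tendsto (fun r => Real.sqrt (c2 r) / Real.sqrt (b2 r))
      Filter.atTop (nhds 0) := by
  intro b2 c2
  have hDpos : ∀ r : ℝ, 0 ≤ r → 0 < (r + n) * (r + 3*n) := fun r hr => by positivity
  -- derivatives
  have hb2deriv : ∀ r : ℝ, HasDerivAt b2 (8*r + 16*n) r := by
    intro r
    have h1 : HasDerivAt (fun r : ℝ => r + n) 1 r := (hasDerivAt_id r).add_const n
    have h2 : HasDerivAt (fun r : ℝ => r + 3*n) 1 r := (hasDerivAt_id r).add_const (3*n)
    have h3 : HasDerivAt (fun r : ℝ => 4*(r + n)) 4 r := by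
      simpa using h1.const_mul 4
    have := h3.mul h2
    exact this.congr_deriv (by ring)
  have hNum : ∀ r : ℝ, HasDerivAt (fun r : ℝ => 16*n^2*(r*(r + 3*n/2)))
      (16*n^2*(2*r + 3*n/2)) r := by
    intro r
    have h1 : HasDerivAt (fun r : ℝ => r*(r + 3*n/2)) (1*(r + 3*n/2) + r*1) r :=
      (hasDerivAt_id r).mul ((hasDerivAt_id r).add_const (3*n/2))
    have := h1.const_mul (16*n^2)
    exact this.congr_deriv (by ring)
  have hDen : ∀ r : ℝ, HasDerivAt (fun r : ℝ => (r + n)*(r + 3*n)) (2*r + 4*n) r := by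
    intro r
    have h1 : HasDerivAt (fun r : ℝ => r + n) 1 r := (hasDerivAt_id r).add_const n
    have h2 : HasDerivAt (fun r : ℝ => r + 3*n) 1 r := (hasDerivAt_id r).add_const (3*n)
    have := h1.mul h2
    exact this.congr_deriv (by ring)
  refine ⟨?_, ?_, ?_, ?_⟩
  · -- (i)
    intro r hr
    constructor
    · rw [(hb2deriv r).deriv]
      nlinarith
    · have hD := (hDpos r hr.le).ne'
      have hder : HasDerivAt c2
          ((16*n^2*(2*r + 3*n/2) * ((r + n)*(r + 3*n)) -
            16*n^2*(r*(r + 3*n/2)) * (2*r + 4*n)) / ((r + n)*(r + 3*n))^2) r :=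
        (hNum r).div (hDen r) hD
      rw [hder.deriv]
      apply div_pos
      · nlinarith [sq_nonneg r, sq_nonneg n, mul_pos hr hn, mul_pos (mul_pos hr hr) hn,
          mul_pos (mul_pos hn hn) hn, mul_pos hr (mul_pos hn hn)]
      · positivity
  · -- (ii)
    intro r hr
    have hD := hDpos r hr.le
    have hle : c2 r ≤ b2 r := by
      rw [div_le_iff₀ hD]
      simp only [b2]
      nlinarith [mul_pos hr hn, mul_pos hn hn, mul_pos (mul_pos hr hr) hn,
        mul_pos (mul_pos hn hn) hn, mul_pos (mul_pos hr hr) (mul_pos hn hn),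
        sq_nonneg r, mul_pos hr (mul_pos hn hn)]
    have hb2 : 0 < b2 r := by simp only [b2]; positivity
    rw [div_le_one (Real.sqrt_pos.mpr hb2)]
    exact Real.sqrt_le_sqrt hle
  · -- (iii) at 0⁺
    have hD0 : ((0:ℝ) + n) * ((0:ℝ) + 3*n) ≠ 0 := (hDpos 0 le_rfl).ne'
    have hc : ContinuousAt c2 0 := by
      apply ContinuousAt.div
      · fun_prop
      · fun_prop
      · exact hD0
    have hb : ContinuousAt b2 0 := by fun_prop
    have hb0 : Real.sqrt (b2 0) ≠ 0 := by
      have : (0:ℝ) < b2 0 := by simp only [b2]; positivity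
      exact (Real.sqrt_pos.mpr this).ne'
    have hcont : ContinuousAt (fun r => Real.sqrt (c2 r) / Real.sqrt (b2 r)) 0 :=
      (hc.sqrt).div (hb.sqrt) hb0
    have h0 : Real.sqrt (c2 0) / Real.sqrt (b2 0) = 0 := by
      have : c2 0 = 0 := by simp [c2]
      rw [this, Real.sqrt_zero, zero_div]
    have := hcont.tendsto.mono_left (nhdsWithin_le_nhds (s := Set.Ioi (0:ℝ)))
    rwa [h0] at this
  · -- (iii) at ∞
    have hbound : ∀ r : ℝ, 0 < r →
        Real.sqrt (c2 r) / Real.sqrt (b2 r) ≤ (2*n) / r := by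
      intro r hr
      have hD := hDpos r hr.le
      have hc2le : c2 r ≤ (4*n)^2 := by
        rw [div_le_iff₀ hD]
        nlinarith [mul_pos hr hn, sq_nonneg r]
      have h1 : Real.sqrt (c2 r) ≤ 4*n := by
        calc Real.sqrt (c2 r) ≤ Real.sqrt ((4*n)^2) := Real.sqrt_le_sqrt hc2le
        _ = 4*n := Real.sqrt_sq (by positivity)
      have h2 : 2*r ≤ Real.sqrt (b2 r) := by
        calc 2*r = Real.sqrt ((2*r)^2) := (Real.sqrt_sq (by positivity)).symm
        _ ≤ Real.sqrt (b2 r) := by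
              apply Real.sqrt_le_sqrt
              simp only [b2]
              nlinarith [mul_pos hr hn, mul_pos hn hn]
      have h2r : (0:ℝ) < 2*r := by positivity
      calc Real.sqrt (c2 r) / Real.sqrt (b2 r) ≤ (4*n) / (2*r) := by
            apply div_le_div₀ (by positivity) h1 h2r h2
        _ = (2*n) / r := by field_simp; ring
    have hupper : Filter.Tendsto (fun r : ℝ => (2*n)/r) Filter.atTop (nhds 0) :=
      Filter.Tendsto.div_atTop tendsto_const_nhds Filter.tendsto_id
    apply squeeze_zero' ?_ ?_ hupper
    · filter_upwards [Filter.eventually_gt_atTop 0] with r hr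
      positivity
    · filter_upwards [Filter.eventually_gt_atTop 0] with r hr
      exact hbound r hr
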